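/- The braid b⁸ = σ_2^{−2} σ_3^{−3} σ_1^{−3} σ_2^{−1} σ_3 σ_2^{−3} σ_3^{−1} σ_2 σ_1^{−2} σ_2^{−1} σ_3^{2} σ_2 σ_1 Δ_4^2 in the braid group B_4 is not quasipositive. -/

import Mathlib

set_option maxRecDepth 40000


open FreeGroup in
/-- The braid relations on `n` generators. -/
def braidRels (n : ℕ) : Set (FreeGroup (Fin n)) :=
  {r | (∃ i j : Fin n, (i : ℕ) + 1 = (j : ℕ) ∧
          r = of i * of j * of i * (of j * of i * of j)⁻¹) ∨
       (∃ i j : Fin n, (i : ℕ) + 2 ≤ (j : ℕ) ∧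
          r = of i * of j * (of j * of i)⁻¹)}

/-- The braid group `B_{n+1}`, presented with `n` generators `σ_1, …, σ_n`
(so `Braid (m - 1)` is the braid group on `m` strands). -/
def Braid (n : ℕ) : Type := PresentedGroup (braidRels n)

instance (n : ℕ) : Group (Braid n) :=
  inferInstanceAs (Group (PresentedGroup (braidRels n)))

/-- The Artin generator `σ_{i+1}` of the braid group (indices start at `0`,
so `σ 0` is the generator usually written `σ_1`). -/
def σ {n : ℕ} (i : Fin n) : Braid n := PresentedGroup.of i

/-- A braid is quasipositive if it can be written as a (possibly empty) product
of conjugates `w σ_1 w⁻¹` of the first Artin generator. -/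
def Quasipositive {n : ℕ} [NeZero n] (b : Braid n) : Prop :=
  ∃ l : List (Braid n), b = (l.map fun w => w * σ 0 * w⁻¹).prod


/-- `σ_1` in the braid group `B_4`. -/
def σ₁ : Braid 3 := σ 0
/-- `σ_2` in the braid group `B_4`. -/
def σ₂ : Braid 3 := σ 1
/-- `σ_3` in the braid group `B_4`. -/
def σ₃ : Braid 3 := σ 2
/-- The Garside element `Δ_4 = σ_1 σ_2 σ_3 σ_1 σ_2 σ_1` of `B_4`. -/
def Δ₄ : Braid 3 := σ₁ * σ₂ * σ₃ * σ₁ * σ₂ * σ₁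

/-! ### Auxiliary: a finite-dimensional representation over `ZMod 3`
(the reduced Burau representation at `t = 2`). -/

namespace B8Aux

abbrev M3 := Matrix (Fin 3) (Fin 3) (ZMod 3)
abbrev G := M3ˣ

instance : DecidableEq G := fun a b => decidable_of_iff (a.val = b.val) Units.ext_iff.symm

/-- Build a unit from a matrix and its explicit inverse. -/
def mkU (A B : M3) (h1 : A * B = 1 := by decide) (h2 : B * A = 1 := by decide) : G :=
  ⟨A, B, h1, h2⟩

def u1 : G := mkU !![1,0,0;1,1,0;0,0,1] !![1,0,0;2,1,0;0,0,1]
def u2 : G := mkU !![1,2,0;0,1,0;0,1,1] !![1,1,0;0,1,0;0,2,1]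
def u3 : G := mkU !![1,0,0;0,1,2;0,0,1] !![1,0,0;0,1,1;0,0,1]
def mU : G := mkU !![1,1,2;1,0,2;0,2,2] !![2,2,2;1,2,0;2,1,2]
def C : List G := [mkU !![0,2,0;1,2,0;1,1,1] !![2,1,0;2,0,0;2,2,1], mkU !![0,2,1;2,0,1;1,1,0] !![2,1,2;1,2,2;2,2,2], mkU !![0,2,2;0,1,0;1,1,2] !![2,1,1;0,1,0;2,2,0], mkU !![1,0,0;0,1,2;0,0,1] !![1,0,0;0,1,1;0,0,1], mkU !![1,0,0;1,1,0;0,0,1] !![1,0,0;2,1,0;0,0,1], mkU !![1,0,0;2,1,1;0,0,1] !![1,0,0;1,1,2;0,0,1], mkU !![1,2,0;0,1,0;0,1,1] !![1,1,0;0,1,0;0,2,1], mkU !![1,2,1;0,2,2;0,1,0] !![1,1,2;0,0,1;0,2,2], mkU !![1,2,2;0,0,2;0,1,2] !![1,1,1;0,2,1;0,2,0], mkU !![2,2,0;1,0,0;2,1,1] !![0,1,0;2,2,0;1,2,1], mkU !![2,2,1;0,1,0;2,1,0] !![0,1,2;0,1,0;1,2,2], mkU !![2,2,2;2,2,1;2,1,2]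 !![0,1,1;1,0,2;1,2,0]]

def f : Fin 3 → G := ![u1, u2, u3]

theorem frels : ∀ r ∈ braidRels 3, FreeGroup.lift f r = 1 := by
  rintro r (⟨i, j, hij, rfl⟩ | ⟨i, j, hij, rfl⟩) <;>
    fin_cases i <;> fin_cases j <;> simp_all [f] <;> decide

/-- The representation `B₄ → GL₃(𝔽₃)`. -/
def φ : Braid 3 →* G := PresentedGroup.toGroup frels

theorem φ_σ (i : Fin 3) : φ (σ i) = f i := PresentedGroup.toGroup.of frels

/-- The exponent sum homomorphism. -/
def ε : Braid 3 →* Multiplicative ℤ :=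
  PresentedGroup.toGroup (f := fun _ => Multiplicative.ofAdd 1)
    (by rintro r (⟨i, j, hij, rfl⟩ | ⟨i, j, hij, rfl⟩) <;> simp <;> decide)

theorem ε_σ (i : Fin 3) : ε (σ i) = Multiplicative.ofAdd 1 :=
  PresentedGroup.toGroup.of _

theorem conj_C_gen : ∀ j : Fin 3,
    (∀ c ∈ C, f j * c * (f j)⁻¹ ∈ C) ∧ (∀ c ∈ C, (f j)⁻¹ * c * f j ∈ C) := by
  intro j
  constructor <;> intro c hc <;> fin_cases j <;> fin_cases hc <;> decide

/-- The subgroup of braids whose image conjugates `C` into `C`. -/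
def H : Subgroup (PresentedGroup (braidRels 3)) where
  carrier := {z | (∀ c ∈ C, φ z * c * (φ z)⁻¹ ∈ C) ∧ (∀ c ∈ C, (φ z)⁻¹ * c * φ z ∈ C)}
  one_mem' := by
    show (∀ c ∈ C, φ (1 : PresentedGroup (braidRels 3)) * c * (φ (1 : PresentedGroup (braidRels 3)))⁻¹ ∈ C) ∧
      (∀ c ∈ C, (φ (1 : PresentedGroup (braidRels 3)))⁻¹ * c * φ (1 : PresentedGroup (braidRels 3)) ∈ C)
    rw [show φ (1 : PresentedGroup (braidRels 3)) = 1 from map_one φ]; simp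
  mul_mem' := by
    rintro a b ⟨ha1, ha2⟩ ⟨hb1, hb2⟩
    constructor <;> intro c hc
    · have : φ (a * b) * c * (φ (a * b))⁻¹ = φ a * (φ b * c * (φ b)⁻¹) * (φ a)⁻¹ := by
        rw [show φ (a * b) = φ a * φ b from map_mul φ a b]; group
      rw [this]; exact ha1 _ (hb1 _ hc)
    · have : (φ (a * b))⁻¹ * c * φ (a * b) = (φ b)⁻¹ * ((φ a)⁻¹ * c * φ a) * φ b := by
        rw [show φ (a * b) = φ a * φ b from map_mul φ a b]; group
      rw [this]; exact hb2 _ (ha2 _ hc)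
  inv_mem' := by
    rintro a ⟨ha1, ha2⟩
    constructor <;> intro c hc <;> rw [show φ (a⁻¹ : PresentedGroup (braidRels 3)) = (φ a)⁻¹ from map_inv φ a, inv_inv]
    · exact ha2 _ hc
    · exact ha1 _ hc

theorem conj_C (z : Braid 3) : ∀ c ∈ C, φ z * c * (φ z)⁻¹ ∈ C := by
  have hz : z ∈ H := by
    refine PresentedGroup.generated_by _ H (fun j => ?_) z
    have h := conj_C_gen j
    exact ⟨by rw [show PresentedGroup.of j = σ j from rfl, φ_σ]; exact h.1,
           by rw [show PresentedGroup.of j = σ j from rfl, φ_σ]; exact h.2⟩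
  exact hz.1

theorem s_mem_C : f 0 ∈ C := by decide

theorem no_factorization : ∀ x ∈ C, ∀ y ∈ C, x * y ≠ mU := by
  intro x hx y hy
  fin_cases hx <;> fin_cases hy <;> decide

end B8Aux

open B8Aux in
theorem b8_not_quasipositive :
    ¬ Quasipositive
      ((σ₂ ^ 2)⁻¹ * (σ₃ ^ 3)⁻¹ * (σ₁ ^ 3)⁻¹ * σ₂⁻¹ * σ₃ * (σ₂ ^ 3)⁻¹ * σ₃⁻¹ * σ₂ *
        (σ₁ ^ 2)⁻¹ * σ₂⁻¹ * σ₃ ^ 2 * σ₂ * σ₁ * Δ₄ ^ 2) := by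
  rintro ⟨l, hl⟩
  set b := (σ₂ ^ 2)⁻¹ * (σ₃ ^ 3)⁻¹ * (σ₁ ^ 3)⁻¹ * σ₂⁻¹ * σ₃ * (σ₂ ^ 3)⁻¹ * σ₃⁻¹ * σ₂ *
        (σ₁ ^ 2)⁻¹ * σ₂⁻¹ * σ₃ ^ 2 * σ₂ * σ₁ * Δ₄ ^ 2 with hb
  -- exponent sum of b is 2
  have hεb : ε b = Multiplicative.ofAdd (2 : ℤ) := by
    rw [hb]
    simp only [Δ₄, σ₁, σ₂, σ₃, map_mul, map_inv, map_pow, ε_σ]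
    decide
  -- exponent sum of the product is the length of l
  have hεl : ε b = Multiplicative.ofAdd (l.length : ℤ) := by
    rw [hl, map_list_prod, List.map_map]
    have : (fun w => ε (w * σ 0 * w⁻¹)) = fun _ : Braid 3 => Multiplicative.ofAdd (1 : ℤ) := by
      funext w
      simp only [map_mul, map_inv, ε_σ]
      rw [mul_comm (ε w), mul_assoc, mul_inv_cancel, mul_one]
    rw [show (ε ∘ fun w => w * σ 0 * w⁻¹) = fun _ : Braid 3 => Multiplicative.ofAdd (1 : ℤ)
        from this, List.map_const', List.prod_replicate]
    rw [← ofAdd_nsmul]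
    simp
  have hlen : l.length = 2 := by
    have := hεl.symm.trans hεb
    have h2 : (l.length : ℤ) = 2 := by
      simpa using Multiplicative.ofAdd.injective this
    exact_mod_cast h2
  obtain ⟨u, v, rfl⟩ := List.length_eq_two.mp hlen
  -- apply φ
  have hφb : φ b = mU := by
    rw [hb]
    simp only [Δ₄, σ₁, σ₂, σ₃, map_mul, map_inv, map_pow, φ_σ]
    decide
  have hφl : φ b = (φ u * f 0 * (φ u)⁻¹) * (φ v * f 0 * (φ v)⁻¹) := by
    rw [hl]
    simp only [List.map_cons, List.map_nil, List.prod_cons, List.prod_nil, mul_one,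
      map_mul, map_inv, φ_σ]
  have hx := conj_C u (f 0) s_mem_C
  have hy := conj_C v (f 0) s_mem_C
  exact no_factorization _ hx _ hy (by rw [← hφl, hφb])
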